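/- Let N ∈ ℕ, n ∈ {3,…,N}, and Z = (z_{j,k}) ∈ ℂ^{N×n} with |z_{j,k}| ≤ 1 for all j, k. With z̃_k, a_{j,k}, β, G_3(Z) as defined, one has |G_3(Z)| ≤ √3 · ∑_{j=1}^N ((1/N²) ∑_{k=1}^n |a_{j,k}|² · min{n/3, 1/(1−β)})^{3/2}. -/

import Mathlib

open scoped BigOperators

/-- The permanent of a rectangular complex matrix `Z ∈ ℂ^{N×n}` (`n ≤ N`):
`per(Z) = ∑_{j ∈ [N]^n_≠} ∏_{k=1}^n z_{j_k,k}`, i.e. the sum over injective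
maps `Fin n → Fin N`. -/
noncomputable def rectPermanent {N n : ℕ} (Z : Matrix (Fin N) (Fin n) ℂ) : ℂ :=
  ∑ j ∈ Finset.univ.filter (fun j : Fin n → Fin N => Function.Injective j),
    ∏ k : Fin n, Z (j k) k

/-- `z̃_k = (1/N) ∑_{j=1}^N z_{j,k}`, the `k`-th column mean. -/
noncomputable def ztilde {N n : ℕ} (Z : Matrix (Fin N) (Fin n) ℂ) (k : Fin n) : ℂ :=
  (N : ℂ)⁻¹ * ∑ j : Fin N, Z j k

/-- `a_{j,k} = z_{j,k} − z̃_k`. -/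
noncomputable def aEnt {N n : ℕ} (Z : Matrix (Fin N) (Fin n) ℂ) (j : Fin N) (k : Fin n) : ℂ :=
  Z j k - ztilde Z k

/-- `G_m(Z) = ((N−m)!/((n−m)!·N!)) · [x_1⋯x_n]((∏_j (1+U_j(x)))·(∑_k z̃_k x_k)^{n−m})`,
where `U_j(x) = ∑_k a_{j,k} x_k` and `[x_1⋯x_n]` denotes the coefficient of the
monomial `x_1⋯x_n` (the `MvPolynomial` coefficient at exponent `∑ k, Finsupp.single k 1`). -/
noncomputable def GZ {N n : ℕ} (Z : Matrix (Fin N) (Fin n) ℂ) (m : ℕ) : ℂ :=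
  ((N - m).factorial : ℂ) / (((n - m).factorial : ℂ) * (N.factorial : ℂ)) *
    MvPolynomial.coeff (∑ k : Fin n, Finsupp.single k 1)
      ((∏ j : Fin N,
          (1 + ∑ k : Fin n, MvPolynomial.C (aEnt Z j k) * MvPolynomial.X k)) *
        (∑ k : Fin n, MvPolynomial.C (ztilde Z k) * MvPolynomial.X k) ^ (n - m))

/-- `H_ℓ(Z) = ∑_{m=0}^ℓ G_m(Z)`. -/
noncomputable def HZ {N n : ℕ} (Z : Matrix (Fin N) (Fin n) ℂ) (ℓ : ℕ) : ℂ :=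
  ∑ m ∈ Finset.range (ℓ + 1), GZ Z m

/-- `C_ℓ = (e^ℓ · ℓ! / ℓ^{ℓ+1/2})^{1/2}`. -/
noncomputable def Cconst (ℓ : ℕ) : ℝ :=
  Real.sqrt (Real.exp ℓ * ℓ.factorial / (ℓ : ℝ) ^ ((ℓ : ℝ) + 1 / 2))

/-- `α = (1/(nN)) ∑_{j=1}^N ∑_{k=1}^n |a_{j,k}|²`. -/
noncomputable def alphaZ {N n : ℕ} (Z : Matrix (Fin N) (Fin n) ℂ) : ℝ :=
  ((n : ℝ) * N)⁻¹ * ∑ j : Fin N, ∑ k : Fin n, ‖aEnt Z j k‖ ^ 2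

/-- `β = (1/n) ∑_{k=1}^n |z̃_k|²`. -/
noncomputable def betaZ {N n : ℕ} (Z : Matrix (Fin N) (Fin n) ℂ) : ℝ :=
  (n : ℝ)⁻¹ * ∑ k : Fin n, ‖ztilde Z k‖ ^ 2

/-- `γ(d) = (nα/N)·min{dn, 1/(1−β)}`; for `β = 1` the quantity `1/(1−β)` is `+∞`,
so the minimum is interpreted as `dn`. `γ = γ(1)`. -/
noncomputable def gammaZ {N n : ℕ} (Z : Matrix (Fin N) (Fin n) ℂ) (d : ℝ) : ℝ :=
  (n : ℝ) * alphaZ Z / N *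
    (if betaZ Z < 1 then min (d * n) (1 / (1 - betaZ Z)) else d * n)


section aux18
open Finset

/-- Exchange/double-counting lemma. -/
lemma exchange {σ M : Type*} [DecidableEq σ] [AddCommMonoid M] (K : Finset σ) (k : ℕ)
    (F : Finset σ → σ → M) :
    ∑ B ∈ K.powersetCard (k+1), ∑ j ∈ B, F B j
      = ∑ A ∈ K.powersetCard k, ∑ j ∈ K \ A, F (insert j A) j := by
  rw [Finset.sum_sigma', Finset.sum_sigma']
  refine Finset.sum_nbij' (fun p => ⟨p.1.erase p.2, p.2⟩)
    (fun p => ⟨insert p.2 p.1, p.2⟩) ?_ ?_ ?_ ?_ ?_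
  · rintro ⟨B, j⟩ hp
    simp only [Finset.mem_sigma, Finset.mem_powersetCard] at hp ⊢
    obtain ⟨⟨hBK, hcard⟩, hj⟩ := hp
    refine ⟨⟨(Finset.erase_subset _ _).trans hBK, ?_⟩, ?_⟩
    · rw [Finset.card_erase_of_mem hj, hcard]; rfl
    · simp [Finset.mem_sdiff, hBK hj]
  · rintro ⟨A, j⟩ hp
    simp only [Finset.mem_sigma, Finset.mem_powersetCard, Finset.mem_sdiff] at hp ⊢
    obtain ⟨⟨hAK, hcard⟩, hjK, hjA⟩ := hp
    refine ⟨⟨?_, ?_⟩, Finset.mem_insert_self _ _⟩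
    · exact Finset.insert_subset hjK hAK
    · rw [Finset.card_insert_of_notMem hjA, hcard]
  · rintro ⟨B, j⟩ hp
    simp only [Finset.mem_sigma, Finset.mem_powersetCard] at hp
    simp [Finset.insert_erase hp.2]
  · rintro ⟨A, j⟩ hp
    simp only [Finset.mem_sigma, Finset.mem_powersetCard, Finset.mem_sdiff] at hp
    simp [Finset.erase_insert hp.2.2]
  · rintro ⟨B, j⟩ hp
    simp only [Finset.mem_sigma, Finset.mem_powersetCard] at hp
    simp [Finset.insert_erase hp.2]

open MvPolynomial


variable {σ : Type*} [Fintype σ] [DecidableEq σ]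

/-- `s * e_k = (k+1) e_{k+1} + D_k` -/
lemma esymm_rec (x : σ → ℝ) (k : ℕ) :
    (∑ i, x i) * (∑ S ∈ univ.powersetCard k, ∏ i ∈ S, x i)
      = (k+1 : ℝ) * (∑ S ∈ univ.powersetCard (k+1), ∏ i ∈ S, x i)
        + ∑ S ∈ univ.powersetCard k, (∏ i ∈ S, x i) * (∑ j ∈ S, x j) := by
  have h2 : (k+1 : ℝ) * (∑ S ∈ univ.powersetCard (k+1), ∏ i ∈ S, x i)
      = ∑ S ∈ univ.powersetCard (k+1), ∑ j ∈ S, ∏ i ∈ S, x i := by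
    rw [Finset.mul_sum]
    refine Finset.sum_congr rfl fun S hS => ?_
    rw [Finset.sum_const, (Finset.mem_powersetCard.1 hS).2, nsmul_eq_mul]
    push_cast; ring
  rw [h2, exchange univ k (fun B j => ∏ i ∈ B, x i), Finset.mul_sum,
    ← Finset.sum_add_distrib]
  refine Finset.sum_congr rfl fun S hS => ?_
  have : ∀ j ∈ univ \ S, ∏ i ∈ insert j S, x i = x j * ∏ i ∈ S, x i := by
    intro j hj
    rw [Finset.prod_insert (Finset.mem_sdiff.1 hj).2]
  rw [Finset.sum_congr rfl this, ← Finset.sum_mul]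
  have : (∑ i, x i) = (∑ j ∈ univ \ S, x j) + ∑ j ∈ S, x j := by
    rw [Finset.sum_sdiff_eq_sub (subset_univ S)]; ring
  rw [this]; ring

/-- Chebyshev-type step: `k * s * e_k ≤ n * D_k`. -/
lemma esymm_cheb (x : σ → ℝ) (hx : ∀ i, 0 ≤ x i) (k : ℕ) :
    (k : ℝ) * (∑ i, x i) * (∑ S ∈ univ.powersetCard k, ∏ i ∈ S, x i)
      ≤ (Fintype.card σ : ℝ) *
        ∑ S ∈ univ.powersetCard k, (∏ i ∈ S, x i) * (∑ j ∈ S, x j) := by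
  rw [← sub_nonneg]
  have key : (Fintype.card σ : ℝ) *
        (∑ S ∈ univ.powersetCard k, (∏ i ∈ S, x i) * (∑ j ∈ S, x j))
      - (k : ℝ) * (∑ i, x i) * (∑ S ∈ univ.powersetCard k, ∏ i ∈ S, x i)
      = ∑ S ∈ univ.powersetCard k, ∑ j ∈ S,
          (∏ i ∈ S, x i) * (∑ i ∈ univ \ S, (x j - x i)) := by
    rw [Finset.mul_sum, Finset.mul_sum, ← Finset.sum_sub_distrib]
    refine Finset.sum_congr rfl fun S hS => ?_
    have hcard : S.card = k := (Finset.mem_powersetCard.1 hS).2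
    rw [← Finset.mul_sum]
    have : ∑ j ∈ S, ∑ i ∈ univ \ S, (x j - x i)
        = (Fintype.card σ : ℝ) * (∑ j ∈ S, x j) - (k:ℝ) * ∑ i, x i := by
      have e1 : ∀ j, ∑ i ∈ univ \ S, (x j - x i)
          = ∑ i ∈ univ, (x j - x i) - ∑ i ∈ S, (x j - x i) := by
        intro j; rw [Finset.sum_sdiff_eq_sub (subset_univ S)]
      rw [Finset.sum_congr rfl fun j _ => e1 j, Finset.sum_sub_distrib]
      simp only [Finset.sum_sub_distrib, Finset.sum_const, nsmul_eq_mul, hcard,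
        Finset.card_univ]
      push_cast
      simp only [← Finset.mul_sum]
      ring
    rw [this]; ring
  rw [key]
  -- now reindex with exchange (k = m+1 case), k = 0 trivial
  rcases k with _ | m
  · simp
  rw [exchange univ m (fun B j => (∏ i ∈ B, x i) * (∑ i ∈ univ \ B, (x j - x i)))]
  refine Finset.sum_nonneg fun A hA => ?_
  have hU : ∀ j ∈ univ \ A, univ \ insert j A = (univ \ A).erase j := by
    intro j hj; ext i
    simp only [Finset.mem_sdiff, Finset.mem_insert, Finset.mem_erase, Finset.mem_univ,
      true_and]
    tauto
  have hins : ∀ j ∈ univ \ A, ∏ i ∈ insert j A, x i = x j * ∏ i ∈ A, x i := by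
    intro j hj; exact Finset.prod_insert (Finset.mem_sdiff.1 hj).2
  calc (0:ℝ) ≤ (∏ i ∈ A, x i) *
      ∑ j ∈ univ \ A, x j * ∑ i ∈ (univ \ A).erase j, (x j - x i) := by
        apply mul_nonneg (Finset.prod_nonneg fun i _ => hx i)
        have : ∑ j ∈ univ \ A, x j * ∑ i ∈ (univ \ A).erase j, (x j - x i)
            = (#(univ \ A) : ℝ) * (∑ j ∈ univ \ A, x j ^ 2)
              - (∑ j ∈ univ \ A, x j) ^ 2 := by
          have h0 : ∀ j ∈ univ \ A, x j * ∑ i ∈ (univ \ A).erase j, (x j - x i)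
              = ∑ i ∈ univ \ A, (x j * x j - x j * x i) := by
            intro j hj
            rw [← Finset.add_sum_erase _ _ hj]
            rw [Finset.mul_sum]
            simp [mul_sub]
          rw [Finset.sum_congr rfl h0]
          rw [Finset.sum_comm]
          simp only [Finset.sum_sub_distrib, Finset.sum_const, nsmul_eq_mul]
          rw [Finset.sum_comm]
          simp only [Finset.sum_sub_distrib, Finset.sum_const, nsmul_eq_mul, ← Finset.mul_sum,
            ← Finset.sum_mul]
          simp only [sq]
        rw [this, sub_nonneg]
        exact sq_sum_le_card_mul_sum_sq
    _ = ∑ j ∈ univ \ A, (∏ i ∈ insert j A, x i) * ∑ i ∈ univ \ insert j A, (x j - x i) := by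
        rw [Finset.mul_sum]
        refine Finset.sum_congr rfl fun j hj => ?_
        rw [hU j hj, hins j hj]; ring


/-- Maclaurin: `e_k * n^k ≤ C(n,k) * s^k` for nonneg `x`. -/
lemma maclaurin (x : σ → ℝ) (hx : ∀ i, 0 ≤ x i) (k : ℕ) :
    (∑ S ∈ univ.powersetCard k, ∏ i ∈ S, x i) * (Fintype.card σ : ℝ) ^ k
      ≤ ((Fintype.card σ).choose k : ℝ) * (∑ i, x i) ^ k := by
  set n := Fintype.card σ with hn
  induction k with
  | zero => simp
  | succ k ih =>
    by_cases hkn : n < k + 1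
    · have h1 : univ.powersetCard (k+1) = (∅ : Finset (Finset σ)) := by
        rw [Finset.powersetCard_eq_empty]
        simpa [hn] using hkn
      have h2 : n.choose (k+1) = 0 := Nat.choose_eq_zero_of_lt hkn
      rw [h1, h2]; simp
    push_neg at hkn
    have hs : (0:ℝ) ≤ ∑ i, x i := Finset.sum_nonneg fun i _ => hx i
    have he : (0:ℝ) ≤ ∑ S ∈ univ.powersetCard k, ∏ i ∈ S, x i :=
      Finset.sum_nonneg fun S _ => Finset.prod_nonneg fun i _ => hx i
    have hnn : (0:ℝ) ≤ (n:ℝ) := by positivity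
    -- (k+1) * e_{k+1} * n ≤ (n - k) * s * e_k
    have key : ((k:ℝ)+1) * (∑ S ∈ univ.powersetCard (k+1), ∏ i ∈ S, x i) * (n:ℝ)
        ≤ ((n:ℝ) - k) * ((∑ i, x i) * ∑ S ∈ univ.powersetCard k, ∏ i ∈ S, x i) := by
      have h1 := esymm_rec x k
      have h2 := esymm_cheb x hx k
      nlinarith [h2]
    have hstep : (∑ S ∈ univ.powersetCard (k+1), ∏ i ∈ S, x i) * (n:ℝ)^(k+1) * ((k:ℝ)+1)
        ≤ ((n:ℝ) - k) * ((n.choose k : ℝ) * (∑ i, x i) ^ k) * (∑ i, x i) := by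
      calc (∑ S ∈ univ.powersetCard (k+1), ∏ i ∈ S, x i) * (n:ℝ)^(k+1) * ((k:ℝ)+1)
          = (((k:ℝ)+1) * (∑ S ∈ univ.powersetCard (k+1), ∏ i ∈ S, x i) * (n:ℝ)) * (n:ℝ)^k := by
            ring
        _ ≤ (((n:ℝ) - k) * ((∑ i, x i) * ∑ S ∈ univ.powersetCard k, ∏ i ∈ S, x i)) * (n:ℝ)^k := by
            apply mul_le_mul_of_nonneg_right key (by positivity)
        _ = ((n:ℝ) - k) * (∑ i, x i) *
              ((∑ S ∈ univ.powersetCard k, ∏ i ∈ S, x i) * (n:ℝ)^k) := by ring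
        _ ≤ ((n:ℝ) - k) * (∑ i, x i) * ((n.choose k : ℝ) * (∑ i, x i) ^ k) := by
            apply mul_le_mul_of_nonneg_left ih
            have hkn' : (k:ℝ)+1 ≤ (n:ℝ) := by exact_mod_cast hkn
            nlinarith
        _ = ((n:ℝ) - k) * ((n.choose k : ℝ) * (∑ i, x i) ^ k) * (∑ i, x i) := by ring
    -- choose identity: choose n (k+1) * (k+1) = choose n k * (n - k)
    have hch : ((n.choose (k+1) : ℝ)) * ((k:ℝ)+1) = (n.choose k : ℝ) * ((n:ℝ) - k) := by
      have := Nat.choose_succ_right_eq n k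
      have hcast : ((n.choose (k+1) * (k+1) : ℕ) : ℝ) = ((n.choose k * (n - k) : ℕ) : ℝ) := by
        exact_mod_cast congrArg (Nat.cast (R := ℝ)) this
      push_cast [Nat.cast_sub (le_of_lt (Nat.lt_of_succ_le hkn))] at hcast
      push_cast
      linarith [hcast]
    have hk1 : (0:ℝ) < (k:ℝ)+1 := by positivity
    rw [← mul_le_mul_iff_left₀ hk1]
    calc (∑ S ∈ univ.powersetCard (k+1), ∏ i ∈ S, x i) * (n:ℝ)^(k+1) * ((k:ℝ)+1)
        ≤ ((n:ℝ) - k) * ((n.choose k : ℝ) * (∑ i, x i) ^ k) * (∑ i, x i) := hstep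
      _ = ((n.choose k : ℝ) * ((n:ℝ) - k)) * (∑ i, x i) ^ (k+1) := by ring
      _ = (n.choose (k+1) : ℝ) * (∑ i, x i) ^ (k+1) * ((k:ℝ)+1) := by rw [← hch]; ring


variable {σ : Type*} [Fintype σ] [DecidableEq σ]

/-- squarefree exponent of a set of variables -/
noncomputable def uof (K : Finset σ) : σ →₀ ℕ := ∑ k ∈ K, Finsupp.single k 1

lemma uof_apply (K : Finset σ) (k : σ) : uof K k = if k ∈ K then 1 else 0 := by
  classical
  rw [uof, Finsupp.finset_sum_apply]
  simp only [Finsupp.single_apply]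
  simp [Finset.sum_ite_eq']

lemma uof_support (K : Finset σ) (k : σ) : k ∈ (uof K).support ↔ k ∈ K := by
  rw [Finsupp.mem_support_iff, uof_apply]
  split <;> simp_all

lemma uof_sub (K : Finset σ) (k : σ) (hk : k ∈ K) :
    uof K - Finsupp.single k 1 = uof (K.erase k) := by
  have : uof K = uof (K.erase k) + Finsupp.single k 1 := by
    rw [uof, uof, ← Finset.add_sum_erase _ _ hk, add_comm]
  rw [this, add_tsub_cancel_right]

/-- Peel one affine factor off a product, extracting a squarefree coefficient. -/
lemma coeff_mul_affine (K : Finset σ) (c : ℂ) (L : σ → ℂ) (q : MvPolynomial σ ℂ) :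
    coeff (uof K) (q * (C c + ∑ k, C (L k) * X k))
      = c * coeff (uof K) q + ∑ k ∈ K, L k * coeff (uof (K.erase k)) q := by
  rw [mul_add, coeff_add, mul_comm q (C c), coeff_C_mul, Finset.mul_sum, coeff_sum]
  congr 1
  have h1 : ∀ k : σ, coeff (uof K) (q * (C (L k) * X k))
      = if k ∈ K then L k * coeff (uof (K.erase k)) q else 0 := by
    intro k
    have : q * (C (L k) * X k) = C (L k) * (q * X k) := by ring
    rw [this, coeff_C_mul, coeff_mul_X']
    by_cases hk : k ∈ K
    · rw [if_pos ((uof_support K k).2 hk), if_pos hk, uof_sub K k hk]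
    · rw [if_neg (fun h => hk ((uof_support K k).1 h)), if_neg hk, mul_zero]
  rw [Finset.sum_congr rfl fun k _ => h1 k, Finset.sum_ite_mem, Finset.univ_inter]

lemma swap_pairs {M : Type*} [AddCommMonoid M] (K : Finset σ) (t : ℕ) (f : σ → Finset σ → M) :
    ∑ k ∈ K, ∑ A ∈ (K.erase k).powersetCard t, f k A
      = ∑ A ∈ K.powersetCard t, ∑ k ∈ K \ A, f k A := by
  rw [Finset.sum_sigma', Finset.sum_sigma']
  refine Finset.sum_nbij' (fun p => ⟨p.2, p.1⟩) (fun p => ⟨p.2, p.1⟩) ?_ ?_ ?_ ?_ ?_ <;>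
    rintro ⟨a, b⟩ hp <;>
    simp only [Finset.mem_sigma, Finset.mem_powersetCard, Finset.mem_sdiff,
      Finset.subset_erase] at hp ⊢ <;> tauto

lemma coeff_mul_linear (K : Finset σ) (L : σ → ℂ) (q : MvPolynomial σ ℂ) :
    MvPolynomial.coeff (uof K) (q * ∑ k, MvPolynomial.C (L k) * MvPolynomial.X k)
      = ∑ k ∈ K, L k * MvPolynomial.coeff (uof (K.erase k)) q := by
  have h := coeff_mul_affine K 0 L q
  rw [map_zero, zero_add, zero_mul, zero_add] at h
  exact h

lemma coeff_mul_linpow (w : σ → ℂ) (q : MvPolynomial σ ℂ) (t : ℕ) (K : Finset σ) :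
    MvPolynomial.coeff (uof K) (q * (∑ k, MvPolynomial.C (w k) * MvPolynomial.X k) ^ t)
      = (t.factorial : ℂ) * ∑ A ∈ K.powersetCard t,
          (∏ k ∈ A, w k) * MvPolynomial.coeff (uof (K \ A)) q := by
  induction t generalizing K with
  | zero => simp
  | succ t ih =>
    rw [pow_succ, ← mul_assoc, coeff_mul_linear K w _]
    have hL : ∑ k ∈ K, w k * MvPolynomial.coeff (uof (K.erase k))
          (q * (∑ k, MvPolynomial.C (w k) * MvPolynomial.X k) ^ t)
        = (t.factorial : ℂ) * ∑ k ∈ K, ∑ A ∈ (K.erase k).powersetCard t,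
            (w k * ∏ j ∈ A, w j) * MvPolynomial.coeff (uof ((K.erase k) \ A)) q := by
      rw [Finset.mul_sum]
      refine Finset.sum_congr rfl fun k hk => ?_
      rw [ih (K.erase k), Finset.mul_sum, Finset.mul_sum, Finset.mul_sum]
      refine Finset.sum_congr rfl fun A hA => ?_
      ring
    rw [hL, swap_pairs K t]
    have hR : ((t+1).factorial : ℂ) * ∑ B ∈ K.powersetCard (t+1),
          (∏ k ∈ B, w k) * MvPolynomial.coeff (uof (K \ B)) q
        = (t.factorial : ℂ) * ∑ B ∈ K.powersetCard (t+1), ∑ j ∈ B,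
            (∏ k ∈ B, w k) * MvPolynomial.coeff (uof (K \ B)) q := by
      rw [Finset.mul_sum, Finset.mul_sum]
      refine Finset.sum_congr rfl fun B hB => ?_
      rw [Finset.sum_const, (Finset.mem_powersetCard.1 hB).2, Nat.factorial_succ]
      push_cast
      ring
    rw [hR, exchange K t]
    refine congrArg _ (Finset.sum_congr rfl fun A hA => Finset.sum_congr rfl fun j hj => ?_)
    have hjA : j ∉ A := (Finset.mem_sdiff.1 hj).2
    have h1 : (K.erase j) \ A = K \ insert j A := by
      ext i
      simp only [Finset.mem_sdiff, Finset.mem_erase, Finset.mem_insert]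
      tauto
    rw [h1, Finset.prod_insert hjA]

variable {ι : Type*} [DecidableEq ι]

noncomputable def Pprod (a : ι → σ → ℂ) (s : Finset ι) : MvPolynomial σ ℂ :=
  ∏ j ∈ s, (1 + ∑ k, MvPolynomial.C (a j k) * MvPolynomial.X k)

lemma Pprod_insert (a : ι → σ → ℂ) (s : Finset ι) (j : ι) (hj : j ∉ s) (K : Finset σ) :
    MvPolynomial.coeff (uof K) (Pprod a (insert j s))
      = MvPolynomial.coeff (uof K) (Pprod a s)
        + ∑ k ∈ K, a j k * MvPolynomial.coeff (uof (K.erase k)) (Pprod a s) := by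
  rw [Pprod, Finset.prod_insert hj, mul_comm, ← Pprod]
  have h1 : (1 + ∑ k, MvPolynomial.C (a j k) * MvPolynomial.X k)
      = MvPolynomial.C (1:ℂ) + ∑ k, MvPolynomial.C (a j k) * MvPolynomial.X k := by
    rw [MvPolynomial.C_1]
  rw [h1, coeff_mul_affine, one_mul]

lemma uof_ne_zero {K : Finset σ} {k : σ} (hk : k ∈ K) : uof K ≠ 0 := by
  intro h
  have := uof_apply K k
  rw [h, if_pos hk] at this
  simp at this

lemma coeffL0 (a : ι → σ → ℂ) (s : Finset ι) :
    MvPolynomial.coeff (uof (∅ : Finset σ)) (Pprod a s) = 1 := by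
  induction s using Finset.induction with
  | empty => simp [Pprod, uof]
  | insert _ _ hj _ => rename_i j s' ih; rw [Pprod_insert a s' j hj]; simp [ih]

lemma coeffL1 (a : ι → σ → ℂ) (s : Finset ι) (k₁ : σ) :
    MvPolynomial.coeff (uof ({k₁} : Finset σ)) (Pprod a s) = ∑ j ∈ s, a j k₁ := by
  induction s using Finset.induction with
  | empty =>
    simp only [Pprod, Finset.prod_empty, MvPolynomial.coeff_one, Finset.sum_empty]
    rw [if_neg (fun h => uof_ne_zero (Finset.mem_singleton_self k₁) h.symm)]
  | insert _ _ hj _ =>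
    rename_i j s' ih
    rw [Pprod_insert a s' j hj, ih, Finset.sum_singleton, Finset.erase_singleton,
      coeffL0, Finset.sum_insert hj]
    ring

lemma coeffL2 (a : ι → σ → ℂ) (s : Finset ι) (k₁ k₂ : σ) (h12 : k₁ ≠ k₂) :
    MvPolynomial.coeff (uof ({k₁, k₂} : Finset σ)) (Pprod a s)
      = (∑ j ∈ s, a j k₁) * (∑ j ∈ s, a j k₂) - ∑ j ∈ s, a j k₁ * a j k₂ := by
  have e1 : ({k₁, k₂} : Finset σ).erase k₁ = {k₂} := by
    ext x; simp only [Finset.mem_erase, Finset.mem_insert, Finset.mem_singleton]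
    constructor
    · rintro ⟨hx, (rfl | rfl)⟩ <;> tauto
    · rintro rfl; exact ⟨(Ne.symm h12), Or.inr rfl⟩
  have e2 : ({k₁, k₂} : Finset σ).erase k₂ = {k₁} := by
    ext x; simp only [Finset.mem_erase, Finset.mem_insert, Finset.mem_singleton]
    constructor
    · rintro ⟨hx, (rfl | rfl)⟩ <;> tauto
    · rintro rfl; exact ⟨h12, Or.inl rfl⟩
  induction s using Finset.induction with
  | empty =>
    simp only [Pprod, Finset.prod_empty, MvPolynomial.coeff_one, Finset.sum_empty]
    rw [if_neg (fun h => uof_ne_zero (Finset.mem_insert_self k₁ {k₂}) h.symm)]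
    ring
  | insert _ _ hj _ =>
    rename_i j s' ih
    rw [Pprod_insert a s' j hj, ih]
    rw [Finset.sum_insert (by simp [h12] : k₁ ∉ ({k₂} : Finset σ)), Finset.sum_singleton,
      e1, e2, coeffL1, coeffL1, Finset.sum_insert hj, Finset.sum_insert hj,
      Finset.sum_insert hj]
    ring

lemma coeffL3 (a : ι → σ → ℂ) (s : Finset ι) (k₁ k₂ k₃ : σ)
    (h12 : k₁ ≠ k₂) (h13 : k₁ ≠ k₃) (h23 : k₂ ≠ k₃) :
    MvPolynomial.coeff (uof ({k₁, k₂, k₃} : Finset σ)) (Pprod a s)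
      = (∑ j ∈ s, a j k₁) * (∑ j ∈ s, a j k₂) * (∑ j ∈ s, a j k₃)
        - (∑ j ∈ s, a j k₁ * a j k₂) * (∑ j ∈ s, a j k₃)
        - (∑ j ∈ s, a j k₁ * a j k₃) * (∑ j ∈ s, a j k₂)
        - (∑ j ∈ s, a j k₂ * a j k₃) * (∑ j ∈ s, a j k₁)
        + 2 * ∑ j ∈ s, a j k₁ * a j k₂ * a j k₃ := by
  have e1 : ({k₁, k₂, k₃} : Finset σ).erase k₁ = {k₂, k₃} := by
    ext x; simp only [Finset.mem_erase, Finset.mem_insert, Finset.mem_singleton]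
    constructor
    · rintro ⟨hx, (rfl | rfl | rfl)⟩ <;> tauto
    · rintro (rfl | rfl) <;> exact ⟨by tauto, by tauto⟩
  have e2 : ({k₁, k₂, k₃} : Finset σ).erase k₂ = {k₁, k₃} := by
    ext x; simp only [Finset.mem_erase, Finset.mem_insert, Finset.mem_singleton]
    constructor
    · rintro ⟨hx, (rfl | rfl | rfl)⟩ <;> tauto
    · rintro (rfl | rfl) <;> exact ⟨by tauto, by tauto⟩
  have e3 : ({k₁, k₂, k₃} : Finset σ).erase k₃ = {k₁, k₂} := by
    ext x; simp only [Finset.mem_erase, Finset.mem_insert, Finset.mem_singleton]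
    constructor
    · rintro ⟨hx, (rfl | rfl | rfl)⟩ <;> tauto
    · rintro (rfl | rfl) <;> exact ⟨by tauto, by tauto⟩
  have hm1 : k₁ ∉ ({k₂, k₃} : Finset σ) := by simp [h12, h13]
  have hm2 : k₂ ∉ ({k₃} : Finset σ) := by simp [h23]
  induction s using Finset.induction with
  | empty =>
    simp only [Pprod, Finset.prod_empty, MvPolynomial.coeff_one, Finset.sum_empty]
    rw [if_neg (fun h => uof_ne_zero (Finset.mem_insert_self k₁ {k₂, k₃}) h.symm)]
    ring
  | insert _ _ hj _ =>
    rename_i j s' ih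
    rw [Pprod_insert a s' j hj, ih]
    rw [Finset.sum_insert hm1, Finset.sum_insert hm2, Finset.sum_singleton,
      e1, e2, e3, coeffL2 a s' k₂ k₃ h23, coeffL2 a s' k₁ k₃ h13,
      coeffL2 a s' k₁ k₂ h12]
    simp only [Finset.sum_insert hj]
    ring

open MvPolynomial
section main
variable {N n : ℕ}

lemma col_sum_zero (Z : Matrix (Fin N) (Fin n) ℂ) (hN : 0 < N) (k : Fin n) :
    ∑ j : Fin N, aEnt Z j k = 0 := by
  have hNne : (N : ℂ) ≠ 0 := by exact_mod_cast hN.ne'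
  simp only [aEnt, Finset.sum_sub_distrib, Finset.sum_const, Finset.card_univ,
    Fintype.card_fin, nsmul_eq_mul, ztilde]
  field_simp; ring

/-- coefficient of a 3-subset in the big product, via cancellation -/
lemma coeff_card3 (Z : Matrix (Fin N) (Fin n) ℂ) (hN : 0 < N)
    (T : Finset (Fin n)) (hT : T.card = 3) :
    MvPolynomial.coeff (uof T) (Pprod (aEnt Z) (univ : Finset (Fin N)))
      = 2 * ∑ j : Fin N, ∏ k ∈ T, aEnt Z j k := by
  obtain ⟨k₁, k₂, k₃, h12, h13, h23, rfl⟩ := Finset.card_eq_three.1 hT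
  rw [coeffL3 (aEnt Z) univ k₁ k₂ k₃ h12 h13 h23]
  have hm1 : k₁ ∉ ({k₂, k₃} : Finset (Fin n)) := by simp [h12, h13]
  have hm2 : k₂ ∉ ({k₃} : Finset (Fin n)) := by simp [h23]
  rw [col_sum_zero Z hN k₁, col_sum_zero Z hN k₂, col_sum_zero Z hN k₃]
  have : ∀ j, ∏ k ∈ ({k₁, k₂, k₃} : Finset (Fin n)), aEnt Z j k
      = aEnt Z j k₁ * aEnt Z j k₂ * aEnt Z j k₃ := by
    intro j
    rw [Finset.prod_insert hm1, Finset.prod_insert hm2, Finset.prod_singleton, mul_assoc]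
  rw [Finset.sum_congr rfl fun j _ => this j]
  ring

lemma G3_eq (hn3 : 3 ≤ n) (hnN : n ≤ N) (Z : Matrix (Fin N) (Fin n) ℂ) :
    GZ Z 3 = ((2 * (N-3).factorial / N.factorial : ℝ) : ℂ) *
      ∑ j : Fin N, ∑ A ∈ (univ : Finset (Fin n)).powersetCard (n-3),
        (∏ k ∈ A, ztilde Z k) * ∏ k ∈ univ \ A, aEnt Z j k := by
  have hN : 0 < N := by omega
  have hexp : (∑ k : Fin n, Finsupp.single k 1 : Fin n →₀ ℕ) = uof univ := rfl
  have hP : (∏ j : Fin N,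
          (1 + ∑ k : Fin n, MvPolynomial.C (aEnt Z j k) * MvPolynomial.X k))
      = Pprod (aEnt Z) univ := rfl
  rw [GZ, hexp, hP, coeff_mul_linpow (ztilde Z) _ (n-3) univ]
  have hcard3 : ∀ A ∈ (univ : Finset (Fin n)).powersetCard (n-3),
      ((univ : Finset (Fin n)) \ A).card = 3 := by
    intro A hA
    obtain ⟨hsub, hcard⟩ := Finset.mem_powersetCard.1 hA
    rw [Finset.card_sdiff_of_subset hsub, Finset.card_univ, Fintype.card_fin, hcard]
    omega
  have step : ∀ A ∈ (univ : Finset (Fin n)).powersetCard (n-3),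
      (∏ k ∈ A, ztilde Z k) * MvPolynomial.coeff (uof (univ \ A)) (Pprod (aEnt Z) univ)
        = 2 * ∑ j : Fin N, (∏ k ∈ A, ztilde Z k) * ∏ k ∈ univ \ A, aEnt Z j k := by
    intro A hA
    rw [coeff_card3 Z hN _ (hcard3 A hA), mul_left_comm, Finset.mul_sum]
  rw [Finset.sum_congr rfl step, ← Finset.mul_sum, Finset.sum_comm]
  have hfac1 : ((n-3).factorial : ℂ) ≠ 0 := by exact_mod_cast (Nat.factorial_pos _).ne'
  have hfac2 : (N.factorial : ℂ) ≠ 0 := by exact_mod_cast (Nat.factorial_pos _).ne'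
  push_cast
  field_simp
end main

section beta
variable {N n : ℕ}

lemma ztilde_norm_le (Z : Matrix (Fin N) (Fin n) ℂ) (hN : 0 < N)
    (hZ : ∀ j k, ‖Z j k‖ ≤ 1) (k : Fin n) : ‖ztilde Z k‖ ≤ 1 := by
  rw [ztilde, norm_mul, norm_inv, Complex.norm_natCast]
  have h1 : ‖∑ j : Fin N, Z j k‖ ≤ (N : ℝ) := by
    calc ‖∑ j : Fin N, Z j k‖ ≤ ∑ j : Fin N, ‖Z j k‖ := norm_sum_le _ _
      _ ≤ ∑ _j : Fin N, (1:ℝ) := Finset.sum_le_sum fun j _ => hZ j k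
      _ = N := by simp
  have hNpos : (0:ℝ) < N := by exact_mod_cast hN
  rw [inv_mul_le_iff₀ hNpos]
  simpa using h1

lemma betaZ_nonneg (Z : Matrix (Fin N) (Fin n) ℂ) : 0 ≤ betaZ Z := by
  apply mul_nonneg (by positivity)
  exact Finset.sum_nonneg fun k _ => sq_nonneg _

lemma betaZ_le_one (Z : Matrix (Fin N) (Fin n) ℂ) (hN : 0 < N) (hn : 0 < n)
    (hZ : ∀ j k, ‖Z j k‖ ≤ 1) : betaZ Z ≤ 1 := by
  rw [betaZ]
  have hnpos : (0:ℝ) < n := by exact_mod_cast hn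
  rw [inv_mul_le_iff₀ hnpos, mul_one]
  calc ∑ k : Fin n, ‖ztilde Z k‖ ^ 2 ≤ ∑ _k : Fin n, (1:ℝ) := by
        refine Finset.sum_le_sum fun k _ => ?_
        have := ztilde_norm_le Z hN hZ k
        nlinarith [norm_nonneg (ztilde Z k)]
    _ = n := by simp

/-- key AM-GM estimate: `n³ β^(n-3) (1-β)³ ≤ 27` for `β ∈ [0,1]`. -/
lemma amgm_beta (hn3 : 3 ≤ n) {b : ℝ} (hb0 : 0 ≤ b) (hb1 : b ≤ 1) :
    (n:ℝ)^3 * b^(n-3) * (1-b)^3 ≤ 27 := by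
  have hnpos : (0:ℝ) < n := by positivity
  rcases eq_or_lt_of_le hn3 with h3 | h4
  · -- n = 3
    rw [← h3]
    norm_num
    nlinarith [pow_le_one₀ (by linarith : (0:ℝ) ≤ 1-b) (by linarith : (1:ℝ)-b ≤ 1) (n := 3)]
  · -- n ≥ 4
    have hm : 0 < n - 3 := by omega
    have hnm : ((n - 3 : ℕ) : ℝ) = (n:ℝ) - 3 := by
      push_cast [Nat.cast_sub (by omega : 3 ≤ n)]; ring
    have hm3 : (0:ℝ) < (n:ℝ) - 3 := by
      have : (4:ℝ) ≤ n := by exact_mod_cast h4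
      linarith
    set w₁ : ℝ := ((n:ℝ) - 3)/n with hw₁
    set w₂ : ℝ := 3/(n:ℝ) with hw₂
    set p₁ : ℝ := (n:ℝ) * b / ((n:ℝ) - 3) with hp₁
    set p₂ : ℝ := (n:ℝ) * (1-b) / 3 with hp₂
    have hw₁0 : 0 ≤ w₁ := by positivity
    have hw₂0 : 0 ≤ w₂ := by positivity
    have hw : w₁ + w₂ = 1 := by rw [hw₁, hw₂]; field_simp; ring
    have hp₁0 : 0 ≤ p₁ := by positivity
    have hp₂0 : 0 ≤ p₂ := by
      have : 0 ≤ 1 - b := by linarith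
      positivity
    have key := Real.geom_mean_le_arith_mean2_weighted hw₁0 hw₂0 hp₁0 hp₂0 hw
    have harith : w₁ * p₁ + w₂ * p₂ = 1 := by
      rw [hw₁, hw₂, hp₁, hp₂]; field_simp; ring
    rw [harith] at key
    -- raise to the n-th power
    have key2 : (p₁ ^ w₁ * p₂ ^ w₂) ^ (n:ℝ) ≤ 1 := by
      have h0 : (0:ℝ) ≤ p₁ ^ w₁ * p₂ ^ w₂ :=
        mul_nonneg (Real.rpow_nonneg hp₁0 _) (Real.rpow_nonneg hp₂0 _)
      calc (p₁ ^ w₁ * p₂ ^ w₂) ^ (n:ℝ) ≤ 1 ^ (n:ℝ) :=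
            Real.rpow_le_rpow h0 key (by positivity)
        _ = 1 := Real.one_rpow _
    have key3 : p₁ ^ ((n:ℝ) - 3) * p₂ ^ (3:ℝ) ≤ 1 := by
      rw [Real.mul_rpow (Real.rpow_nonneg hp₁0 _) (Real.rpow_nonneg hp₂0 _),
        ← Real.rpow_mul hp₁0, ← Real.rpow_mul hp₂0] at key2
      rw [show w₁ * (n:ℝ) = (n:ℝ) - 3 by rw [hw₁]; field_simp,
        show w₂ * (n:ℝ) = 3 by rw [hw₂]; field_simp] at key2
      exact key2
    -- convert rpow to pow
    have key4 : p₁ ^ (n - 3 : ℕ) * p₂ ^ (3:ℕ) ≤ 1 := by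
      have e1 : p₁ ^ ((n:ℝ) - 3) = p₁ ^ (n - 3 : ℕ) := by
        rw [← hnm, Real.rpow_natCast]
      have e2 : p₂ ^ (3:ℝ) = p₂ ^ (3:ℕ) := by
        rw [show (3:ℝ) = ((3:ℕ):ℝ) by norm_num, Real.rpow_natCast]
      rw [e1, e2] at key3
      exact key3
    -- p₁^(n-3) = n^(n-3) b^(n-3) / (n-3)^(n-3), etc.
    have expand : ((n:ℝ))^(n-3:ℕ) * b^(n-3:ℕ) * ((n:ℝ)^3 * (1-b)^3)
        ≤ ((n:ℝ)-3)^(n-3:ℕ) * 27 := by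
      have h1 : p₁ ^ (n-3:ℕ) = ((n:ℝ) * b)^(n-3:ℕ) / ((n:ℝ)-3)^(n-3:ℕ) := by
        rw [hp₁, div_pow]
      have h2 : p₂ ^ (3:ℕ) = ((n:ℝ) * (1-b))^(3:ℕ) / 27 := by
        rw [hp₂, div_pow]; norm_num
      rw [h1, h2] at key4
      rw [div_mul_div_comm, div_le_one (by positivity)] at key4
      calc ((n:ℝ))^(n-3:ℕ) * b^(n-3:ℕ) * ((n:ℝ)^3 * (1-b)^3)
          = ((n:ℝ) * b)^(n-3:ℕ) * ((n:ℝ) * (1-b))^(3:ℕ) := by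
            rw [mul_pow, mul_pow]
        _ ≤ ((n:ℝ)-3)^(n-3:ℕ) * 27 := key4
    have hle : ((n:ℝ)-3)^(n-3:ℕ) ≤ ((n:ℝ))^(n-3:ℕ) :=
      pow_le_pow_left₀ (by linarith) (by linarith) _
    have hpowpos : (0:ℝ) < ((n:ℝ))^(n-3:ℕ) := by positivity
    have hfinal : ((n:ℝ))^(n-3:ℕ) * (b^(n-3:ℕ) * ((n:ℝ)^3 * (1-b)^3))
        ≤ ((n:ℝ))^(n-3:ℕ) * 27 := by
      calc ((n:ℝ))^(n-3:ℕ) * (b^(n-3:ℕ) * ((n:ℝ)^3 * (1-b)^3))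
          = ((n:ℝ))^(n-3:ℕ) * b^(n-3:ℕ) * ((n:ℝ)^3 * (1-b)^3) := by ring
        _ ≤ ((n:ℝ)-3)^(n-3:ℕ) * 27 := expand
        _ ≤ ((n:ℝ))^(n-3:ℕ) * 27 := by nlinarith
    have := (mul_le_mul_iff_right₀ hpowpos).1 hfinal
    nlinarith
end beta

section claimc
variable {n : ℕ}

noncomputable def muB (n : ℕ) (b : ℝ) : ℝ :=
  if b < 1 then min ((n:ℝ)/3) (1/(1-b)) else (n:ℝ)/3

lemma muB_nonneg (hn : 0 < n) {b : ℝ} (hb1 : b ≤ 1) : 0 ≤ muB n b := by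
  have hnpos : (0:ℝ) < n := by positivity
  rw [muB]
  split
  · rename_i h
    have : 0 < 1 - b := by linarith
    positivity
  · positivity

lemma claimC (hn3 : 3 ≤ n) {b : ℝ} (hb0 : 0 ≤ b) (hb1 : b ≤ 1) :
    b^(n-3) * (n:ℝ)^3 ≤ 27 * (muB n b)^3 := by
  have hnpos : (0:ℝ) < n := by positivity
  have hfull : 27 * ((n:ℝ)/3)^3 = (n:ℝ)^3 := by field_simp; ring
  have hble : b^(n-3) ≤ 1 := pow_le_one₀ hb0 hb1
  rw [muB]
  split
  · rename_i hlt
    have h1b : 0 < 1 - b := by linarith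
    rcases le_total ((n:ℝ)/3) (1/(1-b)) with hmin | hmin
    · rw [min_eq_left hmin, hfull]
      nlinarith [pow_pos hnpos 3]
    · rw [min_eq_right hmin]
      have := amgm_beta hn3 hb0 hb1
      have h27 : (n:ℝ)^3 * b^(n-3) ≤ 27 / (1-b)^3 := by
        rw [le_div_iff₀ (by positivity)]
        nlinarith
      calc b^(n-3) * (n:ℝ)^3 ≤ 27 / (1-b)^3 := by nlinarith
        _ = 27 * (1/(1-b))^3 := by field_simp
  · rw [hfull]; nlinarith [pow_pos hnpos 3]
end claimc

end aux18


section aux18b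
open Finset
section rowbound
variable {N n : ℕ}

lemma compl_bij_sum (hn3 : 3 ≤ n) (x : Fin n → ℝ) :
    ∑ A ∈ (univ : Finset (Fin n)).powersetCard (n-3), ∏ k ∈ univ \ A, x k
      = ∑ B ∈ (univ : Finset (Fin n)).powersetCard 3, ∏ k ∈ B, x k := by
  refine Finset.sum_nbij' (fun A => univ \ A) (fun B => univ \ B) ?_ ?_ ?_ ?_ ?_
  · intro A hA
    obtain ⟨hs, hc⟩ := Finset.mem_powersetCard.1 hA
    refine Finset.mem_powersetCard.2 ⟨Finset.subset_univ _, ?_⟩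
    rw [Finset.card_sdiff_of_subset hs, Finset.card_univ, Fintype.card_fin, hc]; omega
  · intro B hB
    obtain ⟨hs, hc⟩ := Finset.mem_powersetCard.1 hB
    refine Finset.mem_powersetCard.2 ⟨Finset.subset_univ _, ?_⟩
    rw [Finset.card_sdiff_of_subset hs, Finset.card_univ, Fintype.card_fin, hc]
  · intro A hA; simp
  · intro B hB; simp
  · intro A hA; rfl

lemma row_bound (hn3 : 3 ≤ n) (hnN : n ≤ N)
    (Z : Matrix (Fin N) (Fin n) ℂ) (hZ : ∀ j k, ‖Z j k‖ ≤ 1) (j : Fin N) :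
    ‖∑ A ∈ (univ : Finset (Fin n)).powersetCard (n-3),
        (∏ k ∈ A, ztilde Z k) * ∏ k ∈ univ \ A, aEnt Z j k‖
      ≤ (n.choose 3 : ℝ) * Real.sqrt 27 *
          Real.sqrt (((∑ k, ‖aEnt Z j k‖^2) * muB n (betaZ Z))^3) / (n:ℝ)^3 := by
  have hN : 0 < N := by omega
  have hn : 0 < n := by omega
  have hnpos : (0:ℝ) < n := by positivity
  set b := betaZ Z with hb
  set μ := muB n b with hμ
  set S := ∑ k, ‖aEnt Z j k‖^2 with hS
  have hb0 : 0 ≤ b := betaZ_nonneg Z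
  have hb1 : b ≤ 1 := betaZ_le_one Z hN hn hZ
  have hμ0 : 0 ≤ μ := muB_nonneg hn hb1
  have hS0 : 0 ≤ S := Finset.sum_nonneg fun k _ => sq_nonneg _
  set Ch := (n.choose 3 : ℝ) with hCh
  have hCh0 : 0 ≤ Ch := by positivity
  -- step 1: triangle inequality
  have h1 : ‖∑ A ∈ (univ : Finset (Fin n)).powersetCard (n-3),
        (∏ k ∈ A, ztilde Z k) * ∏ k ∈ univ \ A, aEnt Z j k‖
      ≤ ∑ A ∈ (univ : Finset (Fin n)).powersetCard (n-3),
        (∏ k ∈ A, ‖ztilde Z k‖) * ∏ k ∈ univ \ A, ‖aEnt Z j k‖ := by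
    refine (norm_sum_le _ _).trans (le_of_eq (Finset.sum_congr rfl fun A hA => ?_))
    rw [norm_mul, norm_prod, norm_prod]
  -- step 2: Cauchy-Schwarz
  have h2 : (∑ A ∈ (univ : Finset (Fin n)).powersetCard (n-3),
        (∏ k ∈ A, ‖ztilde Z k‖) * ∏ k ∈ univ \ A, ‖aEnt Z j k‖)^2
      ≤ (∑ A ∈ (univ : Finset (Fin n)).powersetCard (n-3), ∏ k ∈ A, ‖ztilde Z k‖^2)
        * (∑ A ∈ (univ : Finset (Fin n)).powersetCard (n-3), ∏ k ∈ univ \ A, ‖aEnt Z j k‖^2) := by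
    have := sum_mul_sq_le_sq_mul_sq ((univ : Finset (Fin n)).powersetCard (n-3))
      (fun A => ∏ k ∈ A, ‖ztilde Z k‖) (fun A => ∏ k ∈ univ \ A, ‖aEnt Z j k‖)
    simpa [← Finset.prod_pow] using this
  -- step 3: E bound
  have hsumy : ∑ k, ‖ztilde Z k‖^2 = (n:ℝ) * b := by
    rw [hb, betaZ]; field_simp
  have hE : (∑ A ∈ (univ : Finset (Fin n)).powersetCard (n-3), ∏ k ∈ A, ‖ztilde Z k‖^2)
      ≤ Ch * b^(n-3) := by
    have hmac := maclaurin (fun k : Fin n => ‖ztilde Z k‖^2) (fun k => sq_nonneg _) (n-3)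
    rw [Fintype.card_fin, hsumy, mul_pow, Nat.choose_symm hn3] at hmac
    have hpow : (0:ℝ) < (n:ℝ)^(n-3) := by positivity
    have := le_of_mul_le_mul_right (by calc
      (∑ A ∈ (univ : Finset (Fin n)).powersetCard (n-3), ∏ k ∈ A, ‖ztilde Z k‖^2)
          * (n:ℝ)^(n-3) ≤ Ch * ((n:ℝ)^(n-3) * b^(n-3)) := hmac
      _ = (Ch * b^(n-3)) * (n:ℝ)^(n-3) := by ring) hpow
    exact this
  -- step 4: F bound
  have hF : (∑ A ∈ (univ : Finset (Fin n)).powersetCard (n-3), ∏ k ∈ univ \ A, ‖aEnt Z j k‖^2)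
      ≤ Ch * S^3 / (n:ℝ)^3 := by
    rw [compl_bij_sum hn3]
    have hmac := maclaurin (fun k : Fin n => ‖aEnt Z j k‖^2) (fun k => sq_nonneg _) 3
    rw [Fintype.card_fin] at hmac
    rw [le_div_iff₀ (by positivity)]
    exact hmac
  -- combine
  have hT0 : (0:ℝ) ≤ ∑ A ∈ (univ : Finset (Fin n)).powersetCard (n-3),
        (∏ k ∈ A, ‖ztilde Z k‖) * ∏ k ∈ univ \ A, ‖aEnt Z j k‖ :=
    Finset.sum_nonneg fun A _ => mul_nonneg (Finset.prod_nonneg fun k _ => norm_nonneg _)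
      (Finset.prod_nonneg fun k _ => norm_nonneg _)
  have hE0 : (0:ℝ) ≤ ∑ A ∈ (univ : Finset (Fin n)).powersetCard (n-3), ∏ k ∈ A, ‖ztilde Z k‖^2 :=
    Finset.sum_nonneg fun A _ => Finset.prod_nonneg fun k _ => sq_nonneg _
  have hF0 : (0:ℝ) ≤ ∑ A ∈ (univ : Finset (Fin n)).powersetCard (n-3),
      ∏ k ∈ univ \ A, ‖aEnt Z j k‖^2 :=
    Finset.sum_nonneg fun A _ => Finset.prod_nonneg fun k _ => sq_nonneg _
  have hbc : b^(n-3) ≤ 27 * μ^3 / (n:ℝ)^3 := by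
    rw [le_div_iff₀ (by positivity)]
    exact claimC hn3 hb0 hb1
  have hsq : (∑ A ∈ (univ : Finset (Fin n)).powersetCard (n-3),
        (∏ k ∈ A, ‖ztilde Z k‖) * ∏ k ∈ univ \ A, ‖aEnt Z j k‖)^2
      ≤ Ch^2 * 27 * (S*μ)^3 / (n:ℝ)^6 := by
    calc (∑ A ∈ (univ : Finset (Fin n)).powersetCard (n-3),
        (∏ k ∈ A, ‖ztilde Z k‖) * ∏ k ∈ univ \ A, ‖aEnt Z j k‖)^2
        ≤ (∑ A ∈ (univ : Finset (Fin n)).powersetCard (n-3), ∏ k ∈ A, ‖ztilde Z k‖^2)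
          * (∑ A ∈ (univ : Finset (Fin n)).powersetCard (n-3), ∏ k ∈ univ \ A, ‖aEnt Z j k‖^2)
          := h2
      _ ≤ (Ch * b^(n-3)) * (Ch * S^3 / (n:ℝ)^3) := by
          apply mul_le_mul hE hF hF0 (by positivity)
      _ ≤ (Ch * (27 * μ^3 / (n:ℝ)^3)) * (Ch * S^3 / (n:ℝ)^3) := by
          apply mul_le_mul_of_nonneg_right _ (by positivity)
          exact mul_le_mul_of_nonneg_left hbc hCh0
      _ = Ch^2 * 27 * (S*μ)^3 / (n:ℝ)^6 := by field_simp
  -- take square roots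
  have hRHS0 : (0:ℝ) ≤ Ch * Real.sqrt 27 * Real.sqrt ((S*μ)^3) / (n:ℝ)^3 := by positivity
  have hRHSsq : (Ch * Real.sqrt 27 * Real.sqrt ((S*μ)^3) / (n:ℝ)^3)^2
      = Ch^2 * 27 * (S*μ)^3 / (n:ℝ)^6 := by
    rw [div_pow, mul_pow, mul_pow, Real.sq_sqrt (by norm_num : (27:ℝ) ≥ 0),
      Real.sq_sqrt (by positivity : ((S*μ)^3:ℝ) ≥ 0)]
    ring_nf
  calc ‖∑ A ∈ (univ : Finset (Fin n)).powersetCard (n-3),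
        (∏ k ∈ A, ztilde Z k) * ∏ k ∈ univ \ A, aEnt Z j k‖
      ≤ ∑ A ∈ (univ : Finset (Fin n)).powersetCard (n-3),
        (∏ k ∈ A, ‖ztilde Z k‖) * ∏ k ∈ univ \ A, ‖aEnt Z j k‖ := h1
    _ ≤ Ch * Real.sqrt 27 * Real.sqrt ((S*μ)^3) / (n:ℝ)^3 := by
        nlinarith [hsq, hRHSsq, hRHS0, hT0]
end rowbound

lemma rpow_3div2 {y : ℝ} (hy : 0 ≤ y) : y ^ ((3:ℝ)/2) = Real.sqrt (y^3) := by
  rw [show ((3:ℝ)/2) = ((3:ℕ):ℝ) * (1/2 : ℝ) by norm_num, Real.rpow_mul hy,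
    Real.rpow_natCast, Real.sqrt_eq_rpow, one_div]

lemma descFac3 {m : ℕ} (hm : 3 ≤ m) :
    (m.descFactorial 3 : ℝ) = (m:ℝ) * ((m:ℝ)-1) * ((m:ℝ)-2) := by
  simp only [Nat.descFactorial_succ, Nat.descFactorial_zero, Nat.sub_zero, Nat.mul_one]
  push_cast [Nat.cast_sub (by omega : 1 ≤ m), Nat.cast_sub (by omega : 2 ≤ m)]
  ring



/-- For `|z_{j,k}| ≤ 1` and `3 ≤ n ≤ N`:
`|G_3(Z)| ≤ √3 · ∑_j ((1/N²) ∑_k |a_{j,k}|² · min{n/3, 1/(1−β)})^{3/2}`,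
where for `β = 1` the quantity `min{n/3, 1/(1−β)}` is interpreted as `n/3`. -/
theorem stmt18 (N n : ℕ) (hn3 : 3 ≤ n) (hnN : n ≤ N)
    (Z : Matrix (Fin N) (Fin n) ℂ) (hZ : ∀ j k, ‖Z j k‖ ≤ 1) :
    ‖GZ Z 3‖ ≤
      Real.sqrt 3 * ∑ j : Fin N,
        (((N : ℝ) ^ 2)⁻¹ * (∑ k : Fin n, ‖aEnt Z j k‖ ^ 2) *
            (if betaZ Z < 1 then min ((n : ℝ) / 3) (1 / (1 - betaZ Z)) else (n : ℝ) / 3)) ^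
          ((3 : ℝ) / 2) := by
  have hN : 0 < N := by omega
  have hn : 0 < n := by omega
  have hN3 : 3 ≤ N := le_trans hn3 hnN
  have hnpos : (0:ℝ) < n := by positivity
  have hNpos : (0:ℝ) < N := by positivity
  set b := betaZ Z with hbdef
  set μ := muB n b with hμdef
  have hmu_eq : (if betaZ Z < 1 then min ((n : ℝ) / 3) (1 / (1 - betaZ Z)) else (n : ℝ) / 3)
      = μ := rfl
  have hb1 : b ≤ 1 := betaZ_le_one Z hN hn hZ
  have hμ0 : 0 ≤ μ := muB_nonneg hn hb1
  rw [hmu_eq]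
  set cR : ℝ := 2 * ((N-3).factorial : ℝ) / (N.factorial : ℝ) with hcR
  have hcR0 : 0 ≤ cR := by positivity
  rw [G3_eq hn3 hnN Z]
  rw [norm_mul, Complex.norm_real, Real.norm_eq_abs, abs_of_nonneg hcR0]
  -- per-j statement term equality
  have hstmt : ∀ j : Fin N,
      (((N : ℝ) ^ 2)⁻¹ * (∑ k : Fin n, ‖aEnt Z j k‖ ^ 2) * μ) ^ ((3:ℝ)/2)
        = Real.sqrt (((∑ k, ‖aEnt Z j k‖^2) * μ)^3) / (N:ℝ)^3 := by
    intro j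
    have hS0 : (0:ℝ) ≤ ∑ k, ‖aEnt Z j k‖^2 := Finset.sum_nonneg fun k _ => sq_nonneg _
    have hy0 : (0:ℝ) ≤ ((N : ℝ) ^ 2)⁻¹ * (∑ k : Fin n, ‖aEnt Z j k‖ ^ 2) * μ := by positivity
    rw [rpow_3div2 hy0]
    have : (((N : ℝ) ^ 2)⁻¹ * (∑ k : Fin n, ‖aEnt Z j k‖ ^ 2) * μ)^3
        = ((∑ k, ‖aEnt Z j k‖^2) * μ)^3 * (((N:ℝ)^3)⁻¹)^2 := by
      ring
    rw [this, Real.sqrt_mul (by positivity), Real.sqrt_sq (by positivity)]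
    rw [div_eq_mul_inv]
  -- coefficient inequality
  have h27 : Real.sqrt 27 = 3 * Real.sqrt 3 := by
    rw [show (27:ℝ) = 3^2 * 3 by norm_num, Real.sqrt_mul (by positivity),
      Real.sqrt_sq (by norm_num)]
  have hfacN : (N.factorial:ℝ) = ((N-3).factorial:ℝ) * (N.descFactorial 3 : ℝ) := by
    rw [← Nat.factorial_mul_descFactorial hN3]
    push_cast
    ring
  have hdn : (n.descFactorial 3 : ℝ) = 6 * (n.choose 3:ℝ) := by
    have := Nat.descFactorial_eq_factorial_mul_choose n 3
    exact_mod_cast congrArg (Nat.cast (R := ℝ)) this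
  have hdNv : (N.descFactorial 3 : ℝ) = (N:ℝ) * ((N:ℝ)-1) * ((N:ℝ)-2) := descFac3 hN3
  have hdnv : (n.descFactorial 3 : ℝ) = (n:ℝ) * ((n:ℝ)-1) * ((n:ℝ)-2) := descFac3 hn3
  have h3N : (3:ℝ) ≤ (N:ℝ) := by exact_mod_cast hN3
  have hdN0 : (0:ℝ) < (N.descFactorial 3 : ℝ) := by
    rw [hdNv]
    exact mul_pos (mul_pos (by linarith) (by linarith)) (by linarith)
  have hfN30 : (0:ℝ) < ((N-3).factorial : ℝ) := by positivity
  have hkey : (n.descFactorial 3:ℝ) * (N:ℝ)^3 ≤ (N.descFactorial 3:ℝ) * (n:ℝ)^3 := by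
    rw [hdNv, hdnv]
    have hu : (3:ℝ) ≤ (n:ℝ) := by exact_mod_cast hn3
    have huv : (n:ℝ) ≤ (N:ℝ) := by exact_mod_cast hnN
    have hpos : (0:ℝ) ≤ ((N:ℝ) - (n:ℝ)) * (3*(n:ℝ)*(N:ℝ) - 2*(N:ℝ) - 2*(n:ℝ)) := by
      apply mul_nonneg (by linarith)
      nlinarith
    nlinarith [mul_pos hnpos hNpos, mul_nonneg (mul_nonneg hnpos.le hNpos.le) hpos]
  have hcoef : cR * ((n.choose 3 : ℝ) * Real.sqrt 27 / (n:ℝ)^3) ≤ Real.sqrt 3 / (N:ℝ)^3 := by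
    have hcR2 : cR = 2 / (N.descFactorial 3 : ℝ) := by
      rw [hcR, hfacN, mul_comm (2:ℝ) _, mul_div_mul_left _ _ hfN30.ne']
    have heq : cR * ((n.choose 3 : ℝ) * Real.sqrt 27 / (n:ℝ)^3)
        = Real.sqrt 3 * ((n.descFactorial 3:ℝ) / ((N.descFactorial 3:ℝ) * (n:ℝ)^3)) := by
      rw [hcR2, h27, hdn]
      ring
    rw [heq, show Real.sqrt 3 / (N:ℝ)^3 = Real.sqrt 3 * ((1:ℝ)/(N:ℝ)^3) by ring]
    apply mul_le_mul_of_nonneg_left _ (Real.sqrt_nonneg 3)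
    rw [div_le_div_iff₀ (by positivity) (by positivity)]
    nlinarith [hkey]
  calc cR * ‖∑ j : Fin N, ∑ A ∈ (univ : Finset (Fin n)).powersetCard (n-3),
        (∏ k ∈ A, ztilde Z k) * ∏ k ∈ univ \ A, aEnt Z j k‖
      ≤ cR * ∑ j : Fin N, ‖∑ A ∈ (univ : Finset (Fin n)).powersetCard (n-3),
          (∏ k ∈ A, ztilde Z k) * ∏ k ∈ univ \ A, aEnt Z j k‖ :=
        mul_le_mul_of_nonneg_left (norm_sum_le _ _) hcR0
    _ ≤ cR * ∑ j : Fin N, (n.choose 3 : ℝ) * Real.sqrt 27 *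
          Real.sqrt (((∑ k, ‖aEnt Z j k‖^2) * μ)^3) / (n:ℝ)^3 :=
        mul_le_mul_of_nonneg_left
          (Finset.sum_le_sum fun j _ => row_bound hn3 hnN Z hZ j) hcR0
    _ = ∑ j : Fin N, (cR * ((n.choose 3 : ℝ) * Real.sqrt 27 / (n:ℝ)^3)) *
          Real.sqrt (((∑ k, ‖aEnt Z j k‖^2) * μ)^3) := by
        rw [Finset.mul_sum]
        exact Finset.sum_congr rfl fun j _ => by ring
    _ ≤ ∑ j : Fin N, (Real.sqrt 3 / (N:ℝ)^3) *
          Real.sqrt (((∑ k, ‖aEnt Z j k‖^2) * μ)^3) :=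
        Finset.sum_le_sum fun j _ =>
          mul_le_mul_of_nonneg_right hcoef (Real.sqrt_nonneg _)
    _ = Real.sqrt 3 * ∑ j : Fin N,
          (((N : ℝ) ^ 2)⁻¹ * (∑ k : Fin n, ‖aEnt Z j k‖ ^ 2) * μ) ^ ((3:ℝ)/2) := by
        rw [Finset.mul_sum]
        exact Finset.sum_congr rfl fun j _ => by rw [hstmt j]; ring

end aux18b
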